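/- Let n ≥ 1, i ∈ S_n, p ∈ {0,…,n}, and set (j, q) = Φ(i, p). Then for every p < k ≤ n, every simplicial set X and every simplex x of X of dimension m ≥ n − k, one has D_i^k x = s_q (D_j^{k−1} x). -/

import Mathlib

open CategoryTheory

/-- `memS n l i` means `i ∈ S_{n,l}`: a sequence of length `l` with
`0 ≤ i_s ≤ n - s` for `1 ≤ s ≤ l` (here `i.getD t 0` is the entry `i_{t+1}`). -/
def memS (n l : ℕ) (i : List ℕ) : Prop :=
  i.length = l ∧ ∀ t < l, i.getD t 0 + t + 1 ≤ n

/-- Vertex map of the derived operator. -/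
def derivedFun (f : ℕ → ℕ) : ℕ → ℕ := fun t => if t = 0 then 0 else f (t - 1) + 1

/-- Vertex map of the face map `δ_j`. -/
def deltaFun (j : ℕ) : ℕ → ℕ := fun t => if t < j then t else t + 1

/-- Vertex map of the degeneracy map `σ_j`. -/
def sigmaFun (j : ℕ) : ℕ → ℕ := fun t => if t ≤ j then t else t - 1

/-- Vertex map of the Szczarba operator `D_i^k`, defined by the recursion
`D_∅^0 = id`, `D_i^k = (D_{i'}^k)' s_0 ∂_{i_1 - k}` if `k < i_1`,
`D_i^k = (D_{i'}^k)'` if `k = i_1`, and `D_i^k = (D_{i'}^{k-1})' s_0` if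
`k > i_1`. -/
def DFun : List ℕ → ℕ → ℕ → ℕ
  | [], _ => id
  | (i1 :: i'), k =>
    if k < i1 then deltaFun (i1 - k) ∘ sigmaFun 0 ∘ derivedFun (DFun i' k)
    else if k = i1 then derivedFun (DFun i' k)
    else sigmaFun 0 ∘ derivedFun (DFun i' (k - 1))

/-- The morphism `[b] ⟶ [a]` in the simplex category whose vertex map is (the
monotone clamped version of) `f`.  When `f` is monotone and maps `[b]` into
`[a]`, this is exactly the morphism with vertex map `f`. -/
def mkHomF (a b : ℕ) (f : ℕ → ℕ) : (SimplexCategory.mk b ⟶ SimplexCategory.mk a) :=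
  SimplexCategory.mkHom
    { toFun := fun t => ⟨min ((Finset.range (t.1 + 1)).sup f) a,
        Nat.lt_succ_of_le (min_le_right _ _)⟩
      monotone' := fun u v huv => by
        simp only [Fin.mk_le_mk]
        exact min_le_min
          (Finset.sup_mono (Finset.range_subset_range.mpr (Nat.succ_le_succ huv))) le_rfl }

open Simplicial in
/-- The natural simplicial operator `X_a → X_b` corresponding to the vertex map
`f : [b] → [a]`. -/
def simpOp (X : SSet) (f : ℕ → ℕ) (a b : ℕ) (x : X _⦋a⦌) : X _⦋b⦌ :=
  X.map (mkHomF a b f).op x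

/-- The map `Φ : S_n × [n] → S_{n-1} × [n-1]`, `(i, p) ↦ (j, q)`. -/
def Phi : List ℕ → ℕ → List ℕ × ℕ
  | [], _ => ([], 0)
  | (i1 :: i'), p =>
    if p < i1 then ((i1 - 1) :: (Phi i' p).1, (Phi i' p).2 + 1)
    else if p = i1 ∨ p = i1 + 1 then (i', 0)
    else (i1 :: (Phi i' (p - 1)).1, (Phi i' (p - 1)).2 + 1)

set_option linter.unnecessarySeqFocus false

-- basic monotonicity
lemma mono_sigma (j : ℕ) : Monotone (sigmaFun j) := by
  intro u v h; unfold sigmaFun; split_ifs <;> omega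

lemma mono_delta (j : ℕ) : Monotone (deltaFun j) := by
  intro u v h; unfold deltaFun; split_ifs <;> omega

lemma mono_derived {f : ℕ → ℕ} (hf : Monotone f) : Monotone (derivedFun f) := by
  intro u v h
  unfold derivedFun
  split_ifs with hu hv
  · exact le_rfl
  · exact Nat.zero_le _
  · omega
  · exact Nat.succ_le_succ (hf (by omega))

lemma DFun_mono : ∀ (i : List ℕ) (k : ℕ), Monotone (DFun i k)
  | [], _ => monotone_id
  | (i1 :: i'), k => by
    show Monotone (DFun (i1 :: i') k)
    rw [DFun]
    split_ifs
    · exact (mono_delta _).comp ((mono_sigma 0).comp (mono_derived (DFun_mono i' k)))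
    · exact mono_derived (DFun_mono i' k)
    · exact (mono_sigma 0).comp (mono_derived (DFun_mono i' (k - 1)))

lemma DFun_zero : ∀ (i : List ℕ) (k : ℕ), DFun i k 0 = 0
  | [], _ => rfl
  | (i1 :: i'), k => by
    rw [DFun]
    split_ifs with h1 h2
    · have h : derivedFun (DFun i' k) 0 = 0 := by simp [derivedFun]
      simp only [Function.comp_apply, h]
      unfold sigmaFun deltaFun; split_ifs <;> omega
    · simp [derivedFun]
    · have h : derivedFun (DFun i' (k - 1)) 0 = 0 := by simp [derivedFun]
      simp only [Function.comp_apply, h]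
      unfold sigmaFun; split_ifs <;> omega

lemma memS_cons {n i1 : ℕ} {i' : List ℕ} (h : memS n n (i1 :: i')) :
    memS (n - 1) (n - 1) i' ∧ i1 + 1 ≤ n ∧ 1 ≤ n := by
  obtain ⟨hlen, hb⟩ := h
  simp only [List.length_cons] at hlen
  refine ⟨⟨by omega, fun t ht => ?_⟩, ?_, by omega⟩
  · have := hb (t + 1) (by omega)
    simp only [List.getD_cons_succ] at this
    omega
  · have := hb 0 (by omega)
    simpa using this

lemma DFun_bound : ∀ (i : List ℕ) (n k m t : ℕ), memS n n i → k ≤ n → n - k ≤ m →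
    t ≤ m + k → DFun i k t ≤ m
  | [], n, k, m, t, hi, hk, _, ht => by
    have : n = 0 := by simpa using hi.1.symm
    subst this
    simpa [DFun] using by omega
  | (i1 :: i'), n, k, m, t, hi, hk, hm, ht => by
    obtain ⟨hi', hi1, hn1⟩ := memS_cons hi
    rw [DFun]
    split_ifs with h1 h2
    · -- k < i1
      have hIH : DFun i' k (t - 1) ≤ m - 1 :=
        DFun_bound i' (n - 1) k (m - 1) (t - 1) hi' (by omega) (by omega) (by omega)
      simp only [Function.comp_apply]
      unfold derivedFun sigmaFun deltaFun
      split_ifs <;> omega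
    · -- k = i1
      have hIH : DFun i' k (t - 1) ≤ m - 1 :=
        DFun_bound i' (n - 1) k (m - 1) (t - 1) hi' (by omega) (by omega) (by omega)
      unfold derivedFun
      split_ifs <;> omega
    · -- k > i1
      have hIH : DFun i' (k - 1) (t - 1) ≤ m :=
        DFun_bound i' (n - 1) (k - 1) m (t - 1) hi' (by omega) (by omega) (by omega)
      simp only [Function.comp_apply]
      unfold derivedFun sigmaFun
      split_ifs <;> omega

lemma Phi_bound : ∀ (i : List ℕ) (n p : ℕ), memS n n i → p ≤ n → 1 ≤ n →
    memS (n - 1) (n - 1) (Phi i p).1 ∧ (Phi i p).2 + 1 ≤ n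
  | [], n, p, hi, _, hn => absurd hi.1 (by simp; omega)
  | (i1 :: i'), n, p, hi, hp, hn => by
    obtain ⟨hi', hi1, _⟩ := memS_cons hi
    rw [Phi]
    split_ifs with h1 h2
    · -- p < i1
      obtain ⟨⟨hlen, hb⟩, hq⟩ := Phi_bound i' (n - 1) p hi' (by omega) (by omega)
      refine ⟨⟨by simp [hlen]; omega, fun t ht => ?_⟩, by omega⟩
      rcases t with _ | u
      · simp; omega
      · have := hb u (by omega)
        simp only [List.getD_cons_succ]
        omega
    · exact ⟨hi', by omega⟩
    · -- p > i1 + 1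
      have hpi : i1 + 1 < p := by omega
      obtain ⟨⟨hlen, hb⟩, hq⟩ := Phi_bound i' (n - 1) (p - 1) hi' (by omega) (by omega)
      refine ⟨⟨by simp [hlen]; omega, fun t ht => ?_⟩, by omega⟩
      rcases t with _ | u
      · simp; omega
      · have := hb u (by omega)
        simp only [List.getD_cons_succ]
        omega

lemma derivedFun_succ (f : ℕ → ℕ) (u : ℕ) : derivedFun f (u + 1) = f u + 1 := by
  simp [derivedFun]

lemma derived_comp_sigma (g : ℕ → ℕ) (q : ℕ) :
    derivedFun (g ∘ sigmaFun q) = derivedFun g ∘ sigmaFun (q + 1) := by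
  funext t
  rcases t with _ | u
  · rfl
  · rw [derivedFun_succ, Function.comp_apply, Function.comp_apply]
    by_cases h : u ≤ q
    · rw [show sigmaFun (q + 1) (u + 1) = u + 1 from by unfold sigmaFun; split_ifs <;> omega,
          derivedFun_succ,
          show sigmaFun q u = u from by unfold sigmaFun; split_ifs <;> omega]
    · rw [show sigmaFun (q + 1) (u + 1) = u from by unfold sigmaFun; split_ifs <;> omega,
          show sigmaFun q u = u - 1 from by unfold sigmaFun; split_ifs <;> omega]
      unfold derivedFun
      rw [if_neg (by omega)]

lemma sigma0_derived (g : ℕ → ℕ) (hg : g 0 = 0) :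
    sigmaFun 0 ∘ derivedFun g = g ∘ sigmaFun 0 := by
  funext t
  simp only [Function.comp_apply]
  unfold derivedFun sigmaFun
  rcases t with _ | u
  · simp [hg]
  · simp

lemma DFun_Phi : ∀ (i : List ℕ) (n p k : ℕ), memS n n i → 1 ≤ n → p ≤ n → p < k →
    DFun i k = DFun (Phi i p).1 (k - 1) ∘ sigmaFun (Phi i p).2
  | [], n, p, k, hi, hn, _, _ => absurd hi.1 (by simp; omega)
  | (i1 :: i'), n, p, k, hi, hn, hp, hpk => by
    obtain ⟨hi', hi1, _⟩ := memS_cons hi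
    by_cases hp1 : p < i1
    · have hPhi : Phi (i1 :: i') p = ((i1 - 1) :: (Phi i' p).1, (Phi i' p).2 + 1) := by
        rw [Phi]; simp [hp1]
      rw [hPhi]
      rcases Nat.lt_trichotomy k i1 with hk1 | hk1 | hk1
      · have IH := DFun_Phi i' (n - 1) p k hi' (by omega) (by omega) hpk
        rw [show DFun (i1 :: i') k
            = deltaFun (i1 - k) ∘ sigmaFun 0 ∘ derivedFun (DFun i' k) from by
          rw [DFun]; simp [hk1]]
        rw [show DFun ((i1 - 1) :: (Phi i' p).1) (k - 1)
            = deltaFun ((i1 - 1) - (k - 1)) ∘ sigmaFun 0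
                ∘ derivedFun (DFun (Phi i' p).1 (k - 1)) from by
          rw [DFun]; simp [show k - 1 < i1 - 1 by omega]]
        rw [show (i1 - 1) - (k - 1) = i1 - k by omega]
        rw [IH, derived_comp_sigma]
        rfl
      · have IH := DFun_Phi i' (n - 1) p k hi' (by omega) (by omega) hpk
        rw [show DFun (i1 :: i') k = derivedFun (DFun i' k) from by
          rw [DFun]; simp [hk1]]
        rw [show DFun ((i1 - 1) :: (Phi i' p).1) (k - 1)
            = derivedFun (DFun (Phi i' p).1 (k - 1)) from by
          rw [DFun]; simp [show ¬ (k - 1 < i1 - 1) by omega, show k - 1 = i1 - 1 by omega]]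
        rw [IH, derived_comp_sigma]
      · have IH := DFun_Phi i' (n - 1) p (k - 1) hi' (by omega) (by omega) (by omega)
        rw [show DFun (i1 :: i') k = sigmaFun 0 ∘ derivedFun (DFun i' (k - 1)) from by
          rw [DFun]; simp [show ¬ k < i1 by omega, show ¬ k = i1 by omega]]
        rw [show DFun ((i1 - 1) :: (Phi i' p).1) (k - 1)
            = sigmaFun 0 ∘ derivedFun (DFun (Phi i' p).1 (k - 1 - 1)) from by
          rw [DFun]; simp [show ¬ k - 1 < i1 - 1 by omega, show ¬ k - 1 = i1 - 1 by omega]]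
        rw [IH, derived_comp_sigma]
        rfl
    · by_cases hp2 : p = i1 ∨ p = i1 + 1
      · have hPhi : Phi (i1 :: i') p = (i', 0) := by
          rw [Phi]; simp [hp1, hp2]
        rw [hPhi]
        rw [show DFun (i1 :: i') k = sigmaFun 0 ∘ derivedFun (DFun i' (k - 1)) from by
          rw [DFun]; simp [show ¬ k < i1 by omega, show ¬ k = i1 by omega]]
        exact sigma0_derived _ (DFun_zero i' (k - 1))
      · have hPhi : Phi (i1 :: i') p
            = (i1 :: (Phi i' (p - 1)).1, (Phi i' (p - 1)).2 + 1) := by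
          rw [Phi]; simp [hp1, hp2]
        rw [hPhi]
        have hpi : i1 + 1 < p := by omega
        have IH := DFun_Phi i' (n - 1) (p - 1) (k - 1) hi' (by omega) (by omega) (by omega)
        rw [show DFun (i1 :: i') k = sigmaFun 0 ∘ derivedFun (DFun i' (k - 1)) from by
          rw [DFun]; simp [show ¬ k < i1 by omega, show ¬ k = i1 by omega]]
        rw [show DFun (i1 :: (Phi i' (p - 1)).1) (k - 1)
            = sigmaFun 0 ∘ derivedFun (DFun (Phi i' (p - 1)).1 (k - 1 - 1)) from by
          rw [DFun]; simp [show ¬ k - 1 < i1 by omega, show ¬ k - 1 = i1 by omega]]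
        rw [IH, derived_comp_sigma]
        rfl

lemma sup_range_monotone {f : ℕ → ℕ} (hf : Monotone f) (t : ℕ) :
    (Finset.range (t + 1)).sup f = f t := by
  apply le_antisymm
  · exact Finset.sup_le fun u hu => hf (Nat.lt_succ_iff.mp (Finset.mem_range.mp hu))
  · exact Finset.le_sup (Finset.mem_range.mpr (Nat.lt_succ_self t))

lemma mkHomF_val {a b : ℕ} {f : ℕ → ℕ} (hf : Monotone f) (hb : f b ≤ a)
    (t : Fin (b + 1)) : ((mkHomF a b f).toOrderHom t).1 = f t.1 := by
  show min ((Finset.range (t.1 + 1)).sup f) a = f t.1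
  rw [sup_range_monotone hf, min_eq_left (le_trans (hf (Nat.lt_succ_iff.mp t.2)) hb)]

lemma mkHomF_comp {a b c : ℕ} {f g : ℕ → ℕ} (hf : Monotone f) (hg : Monotone g)
    (hfb : f b ≤ a) (hgc : g c ≤ b) :
    mkHomF a c (f ∘ g) = mkHomF b c g ≫ mkHomF a b f := by
  apply SimplexCategory.Hom.ext
  apply OrderHom.ext
  funext t
  apply Fin.ext
  calc ((mkHomF a c (f ∘ g)).toOrderHom t).1
      = f (g t.1) := mkHomF_val (hf.comp hg) (le_trans (hf hgc) hfb) t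
    _ = f (((mkHomF b c g).toOrderHom t).1) := by rw [mkHomF_val hg hgc t]
    _ = ((mkHomF a b f).toOrderHom ((mkHomF b c g).toOrderHom t)).1 :=
        (mkHomF_val hf hfb _).symm
    _ = ((mkHomF b c g ≫ mkHomF a b f).toOrderHom t).1 := rfl


open Simplicial in
/-- For `n ≥ 1`, `i ∈ S_n`, `p ∈ {0, …, n}`,
`(j, q) = Φ(i, p)`, `p < k ≤ n`, any simplicial set `X` and any simplex `x` of
dimension `m ≥ n - k`:  `D_i^k x = s_q (D_j^{k-1} x)`. -/
theorem szczarba_D_degeneracy_high (n : ℕ) (hn : 1 ≤ n) (i : List ℕ) (hi : memS n n i)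
    (p : ℕ) (hp : p ≤ n) (k : ℕ) (hk1 : p < k) (hk2 : k ≤ n)
    (X : SSet) (m : ℕ) (hm : n - k ≤ m) (x : X _⦋m⦌) :
    simpOp X (DFun i k) m (m + k) x
      = simpOp X (sigmaFun (Phi i p).2) (m + (k - 1)) (m + k)
          (simpOp X (DFun (Phi i p).1 (k - 1)) m (m + (k - 1)) x) := by
  obtain ⟨hij, hq⟩ := Phi_bound i n p hi hp hn
  have hF : DFun i k = DFun (Phi i p).1 (k - 1) ∘ sigmaFun (Phi i p).2 :=
    DFun_Phi i n p k hi hn hp hk1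
  have hDb : DFun (Phi i p).1 (k - 1) (m + (k - 1)) ≤ m :=
    DFun_bound _ (n - 1) (k - 1) m _ hij (by omega) (by omega) le_rfl
  have hsb : sigmaFun (Phi i p).2 (m + k) ≤ m + (k - 1) := by
    unfold sigmaFun; split_ifs <;> omega
  unfold simpOp
  rw [← FunctorToTypes.map_comp_apply, ← op_comp,
    ← mkHomF_comp (DFun_mono _ _) (mono_sigma _) hDb hsb, ← hF]
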